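/- Let G be a finitely generated group with subgroups Λ and Σ. If X is a non-trivial Λ-almost invariant subset of G and Y is a non-trivial Σ-almost invariant subset of G, then X crosses Y if and only if Y crosses X. -/

import Mathlib

/-!
Statement 0 (Lemma: crossing is symmetric).
`G` a finitely generated group, `Λ`, `Σ` subgroups; `X` a non-trivial `Λ`-almost invariant
subset of `G`, `Y` a non-trivial `Σ`-almost invariant subset of `G`.
Then `X` crosses `Y` iff `Y` crosses `X`.
-/

open scoped Pointwise symmDiff

/-- The image of a subset `X ⊆ G` in the set `H\G` of right cosets `Hg`
(the quotient of `G` by the left multiplication action of `H`). -/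
def rproj {G : Type*} [Group G] (H : Subgroup G) (X : Set G) :
    Set (Quotient (QuotientGroup.rightRel H)) :=
  Quotient.mk (QuotientGroup.rightRel H) '' X

/-- Two sets are almost equal if their symmetric difference is finite. -/
def AlmostEqSets {α : Type*} (A B : Set α) : Prop :=
  (A ∆ B).Finite

/-- `X ⊆ G` is `H`-almost invariant: `hX = X` for all `h ∈ H`, and for every `g ∈ G`
the sets `(H\X)g` and `H\X` are almost equal. -/
def IsAlmostInvariant {G : Type*} [Group G] (H : Subgroup G) (X : Set G) : Prop :=
  (∀ h ∈ H, h • X = X) ∧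
    ∀ g : G, AlmostEqSets (rproj H ((fun x => x * g) '' X)) (rproj H X)

/-- `X` is a non-trivial `H`-almost invariant subset of `G`:
in addition `H\X` and `H\Xᶜ` are both infinite. -/
def IsNontrivialAlmostInvariant {G : Type*} [Group G] (H : Subgroup G) (X : Set G) : Prop :=
  IsAlmostInvariant H X ∧ (rproj H X).Infinite ∧ (rproj H Xᶜ).Infinite

/-- `X` crosses `Y`, where `Y` is `K`-almost invariant: each of the four sets
`X ∩ Y`, `Xᶜ ∩ Y`, `X ∩ Yᶜ`, `Xᶜ ∩ Yᶜ` projects to an infinite subset of `K\G`. -/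
def Crosses {G : Type*} [Group G] (K : Subgroup G) (X Y : Set G) : Prop :=
  (rproj K (X ∩ Y)).Infinite ∧ (rproj K (Xᶜ ∩ Y)).Infinite ∧
    (rproj K (X ∩ Yᶜ)).Infinite ∧ (rproj K (Xᶜ ∩ Yᶜ)).Infinite

namespace CrossSym
variable {G : Type*} [Group G]

def qm (H : Subgroup G) (x : G) : Quotient (QuotientGroup.rightRel H) :=
  Quotient.mk (QuotientGroup.rightRel H) x

lemma qm_eq_iff {H : Subgroup G} {x y : G} : qm H x = qm H y ↔ y * x⁻¹ ∈ H := by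
  rw [qm, qm, Quotient.eq]
  exact QuotientGroup.rightRel_apply

lemma rproj_eq (H : Subgroup G) (A : Set G) : rproj H A = qm H '' A := rfl

/-- `A` is invariant under left multiplication by `H`. -/
def Sat (H : Subgroup G) (A : Set G) : Prop := ∀ h ∈ H, ∀ x ∈ A, h * x ∈ A

lemma Sat.mem_iff {H : Subgroup G} {A : Set G} (hA : Sat H A) {h x : G} (hh : h ∈ H) :
    h * x ∈ A ↔ x ∈ A := by
  refine ⟨fun hx => ?_, fun hx => hA h hh x hx⟩
  have := hA h⁻¹ (H.inv_mem hh) _ hx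
  simpa using this

lemma sat_of_smul {H : Subgroup G} {A : Set G} (hA : ∀ h ∈ H, h • A = A) : Sat H A := by
  intro h hh x hx
  rw [← hA h hh]
  exact ⟨x, hx, rfl⟩

lemma Sat.smul_eq {H : Subgroup G} {A : Set G} (hA : Sat H A) : ∀ h ∈ H, h • A = A := by
  intro h hh
  apply subset_antisymm
  · rintro _ ⟨x, hx, rfl⟩; exact hA h hh x hx
  · intro x hx
    exact ⟨h⁻¹ * x, hA h⁻¹ (H.inv_mem hh) x hx, by simp [smul_eq_mul, mul_assoc]⟩

lemma Sat.compl {H : Subgroup G} {A : Set G} (hA : Sat H A) : Sat H Aᶜ := by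
  intro h hh x hx
  simpa [Set.mem_compl_iff, hA.mem_iff hh] using hx

lemma Sat.mem_of_qm_eq {H : Subgroup G} {A : Set G} (hA : Sat H A) {x a : G}
    (ha : a ∈ A) (h : qm H x = qm H a) : x ∈ A := by
  rw [qm_eq_iff] at h
  have := hA _ (H.inv_mem h) a ha
  simpa [mul_assoc] using this

lemma Sat.qm_mem_rproj_iff {H : Subgroup G} {A : Set G} (hA : Sat H A) {x : G} :
    qm H x ∈ rproj H A ↔ x ∈ A :=
  ⟨fun ⟨a, ha, he⟩ => hA.mem_of_qm_eq ha he.symm, fun h => ⟨x, h, rfl⟩⟩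

lemma rproj_union (H : Subgroup G) (A B : Set G) :
    rproj H (A ∪ B) = rproj H A ∪ rproj H B := Set.image_union _ _ _

lemma rproj_mono {H : Subgroup G} {A B : Set G} (h : A ⊆ B) : rproj H A ⊆ rproj H B :=
  Set.image_mono h

lemma rproj_diff_subset {H : Subgroup G} {A B : Set G} (hB : Sat H B) :
    rproj H (A \ B) ⊆ rproj H A \ rproj H B := by
  rintro q ⟨x, ⟨hxA, hxB⟩, rfl⟩
  exact ⟨⟨x, hxA, rfl⟩, fun hq => hxB ((hB.qm_mem_rproj_iff).mp hq)⟩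

lemma rproj_symmDiff_subset {H : Subgroup G} {A B : Set G} (hA : Sat H A) (hB : Sat H B) :
    rproj H (A ∆ B) ⊆ rproj H A ∆ rproj H B := by
  rw [Set.symmDiff_def, rproj_union, Set.symmDiff_def]
  exact Set.union_subset_union (rproj_diff_subset hB) (rproj_diff_subset hA)

lemma rproj_compl {H : Subgroup G} {A : Set G} (hA : Sat H A) :
    rproj H Aᶜ = (rproj H A)ᶜ := by
  ext q
  induction q using Quotient.ind with
  | _ x =>
    show qm H x ∈ _ ↔ qm H x ∈ _
    rw [hA.compl.qm_mem_rproj_iff, Set.mem_compl_iff, Set.mem_compl_iff, hA.qm_mem_rproj_iff]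

def rmul (H : Subgroup G) (a : G) :
    Quotient (QuotientGroup.rightRel H) → Quotient (QuotientGroup.rightRel H) :=
  Quotient.map (fun x => x * a) (by
    intro x y h
    have h' := QuotientGroup.rightRel_apply.mp h
    show (QuotientGroup.rightRel H) _ _
    rw [QuotientGroup.rightRel_apply]
    have : y * a * (x * a)⁻¹ = y * x⁻¹ := by group
    rw [this]; exact h')

lemma rmul_qm (H : Subgroup G) (a x : G) : rmul H a (qm H x) = qm H (x * a) := rfl

lemma rproj_mul_right (H : Subgroup G) (a : G) (A : Set G) :
    rproj H ((fun x => x * a) '' A) = rmul H a '' rproj H A := by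
  rw [rproj_eq, rproj_eq, ← Set.image_comp, ← Set.image_comp]
  rfl

lemma sat_mul_right {H : Subgroup G} {A : Set G} (hA : Sat H A) (c : G) :
    Sat H ((fun x => x * c) '' A) := by
  rintro h hh _ ⟨y, hy, rfl⟩
  exact ⟨h * y, hA h hh y hy, by simp [mul_assoc]⟩

end CrossSym

namespace CrossSym
variable {G : Type*} [Group G]

lemma main [Group.FG G] (L K : Subgroup G) (X Y : Set G)
    (hXsat : Sat L X)
    (hXinf : (rproj L X).Infinite)
    (hYsat : Sat K Y)
    (hYai : ∀ g : G, AlmostEqSets (rproj K ((fun x => x * g) '' Y)) (rproj K Y))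
    (hfin : (rproj L (X ∩ Y)).Finite)
    (hKinf : (rproj K (X ∩ Y)).Infinite) : False := by
  classical
  -- Step 1: pigeonhole over the finitely many L-cosets meeting X ∩ Y.
  have cover : rproj K (X ∩ Y) ⊆
      ⋃ q ∈ rproj L (X ∩ Y), rproj K ({x | qm L x = q} ∩ Y) := by
    rintro p ⟨x, hx, rfl⟩
    exact Set.mem_biUnion ⟨x, hx, rfl⟩ ⟨x, ⟨rfl, hx.2⟩, rfl⟩
  have hex : ∃ q ∈ rproj L (X ∩ Y), (rproj K ({x | qm L x = q} ∩ Y)).Infinite := by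
    by_contra hcon
    push_neg at hcon
    exact hKinf ((hfin.biUnion fun q hq => hcon q hq).subset cover)
  obtain ⟨q, hqQ, hqinf⟩ := hex
  obtain ⟨a, -, rfl⟩ := hqQ
  change (rproj K ({x | qm L x = qm L a} ∩ Y)).Infinite at hqinf
  -- Step 2: the fiber over `qm L a`, intersected with Y, is a right translate of L ∩ Y·a⁻¹.
  have fib : {x | qm L x = qm L a} ∩ Y =
      (fun x => x * a) '' ((L : Set G) ∩ ((fun x => x * a⁻¹) '' Y)) := by
    ext x
    constructor
    · rintro ⟨hq, hxY⟩
      rw [Set.mem_setOf_eq, qm_eq_iff] at hq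
      refine ⟨x * a⁻¹, ⟨?_, ⟨x, hxY, rfl⟩⟩, by simp⟩
      have := L.inv_mem hq
      simpa using this
    · rintro ⟨w, ⟨hwL, y, hyY, rfl⟩, rfl⟩
      constructor
      · rw [Set.mem_setOf_eq, qm_eq_iff]
        have h' := L.inv_mem hwL
        simp only [mul_inv_rev, inv_inv] at h'
        simpa [mul_assoc] using h'
      · simpa using hyY
  have hWinf : (rproj K ((L : Set G) ∩ ((fun x => x * a⁻¹) '' Y))).Infinite := by
    rw [fib, rproj_mul_right] at hqinf
    exact Set.Infinite.of_image _ hqinf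
  -- Step 3: replace Y·a⁻¹ by Y, at the cost of a K-finite error set.
  have hsub : (L : Set G) ∩ ((fun x => x * a⁻¹) '' Y) ⊆
      ((L : Set G) ∩ Y) ∪ (((fun x => x * a⁻¹) '' Y) \ Y) := by
    rintro x ⟨hxL, hxY'⟩
    by_cases h : x ∈ Y
    · exact Or.inl ⟨hxL, h⟩
    · exact Or.inr ⟨hxY', h⟩
  have hdiff_fin : (rproj K (((fun x => x * a⁻¹) '' Y) \ Y)).Finite := by
    refine (hYai a⁻¹).subset ?_
    refine (rproj_diff_subset hYsat).trans ?_
    rw [Set.symmDiff_def]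
    exact (Set.subset_union_left).trans (by rfl)
  have hLYinf : (rproj K ((L : Set G) ∩ Y)).Infinite := by
    by_contra hcon
    apply hWinf
    refine Set.Finite.subset ((Set.not_infinite.mp hcon).union hdiff_fin) ?_
    rw [← rproj_union]
    exact rproj_mono hsub
  -- Step 4: finite generating set and the coboundary set N.
  obtain ⟨S, hSclos, hSfin⟩ := (Subgroup.fg_iff ⊤).mp (Group.FG.out (G := G))
  set T : Set G := S ∪ S⁻¹ with hT
  have hTfin : T.Finite := hSfin.union hSfin.inv
  set N : Set G := ⋃ s ∈ T, (((fun x => x * s) '' Y) ∆ Y) with hN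
  have hNsat : Sat K N := by
    intro h hh x hx
    simp only [hN, Set.mem_iUnion] at hx ⊢
    obtain ⟨s, hs, hx⟩ := hx
    refine ⟨s, hs, ?_⟩
    rw [Set.mem_symmDiff] at hx ⊢
    have h1 := (sat_mul_right hYsat s).mem_iff (x := x) hh
    have h2 := hYsat.mem_iff (x := x) hh
    tauto
  have hNKfin : (rproj K N).Finite := by
    rw [hN, rproj_eq, Set.image_iUnion₂]
    refine Set.Finite.biUnion hTfin fun s _ => ?_
    exact (hYai s).subset (rproj_symmDiff_subset (sat_mul_right hYsat s) hYsat)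
  -- Step 5: stepping inside Y along generators, away from N.
  have hstep : ∀ y ∈ Y, ∀ s ∈ T, y * s ∉ N → y * s ∈ Y := by
    intro y hy s hs hn
    by_contra hns
    exact hn (Set.mem_biUnion hs (Set.mem_symmDiff.mpr (Or.inl ⟨⟨y, hy, rfl⟩, hns⟩)))
  have chain : ∀ l : List G, (∀ x ∈ l, x ∈ T) → ∀ y ∈ Y,
      (∀ t : List G, t <+: l → y * t.prod ∉ N) → y * l.prod ∈ Y := by
    intro l
    induction l with
    | nil => intro _ y hy _; simpa using hy
    | cons s l ih =>
      intro hmem y hy hav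
      have hys : y * s ∈ Y := by
        refine hstep y hy s (hmem s (by simp)) ?_
        have := hav [s] ⟨l, rfl⟩
        simpa using this
      have := ih (fun x hx => hmem x (List.mem_cons_of_mem _ hx)) (y * s) hys (fun t ht => by
        obtain ⟨r, hr⟩ := ht
        have := hav (s :: t) ⟨r, by simp [hr]⟩
        simpa [mul_assoc] using this)
      simpa [mul_assoc] using this
  -- Step 6: every element of X is L-equivalent to an element of X ∩ Y.
  have key : ∀ g ∈ X, qm L g ∈ rproj L (X ∩ Y) := by
    intro g hgX
    have hgcl : g ∈ Submonoid.closure T := by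
      have h1 : g ∈ Subgroup.closure S := hSclos ▸ Subgroup.mem_top g
      rw [← Subgroup.mem_toSubmonoid, Subgroup.closure_toSubmonoid] at h1
      exact h1
    obtain ⟨l, hlmem, hlprod⟩ := Submonoid.exists_list_of_mem_closure hgcl
    set Bad : Set (Quotient (QuotientGroup.rightRel K)) :=
      ⋃ t ∈ l.inits.toFinset, rmul K (t : List G).prod⁻¹ '' rproj K N with hBad
    have hBadfin : Bad.Finite :=
      Set.Finite.biUnion (l.inits.toFinset.finite_toSet) fun t _ => hNKfin.image _
    obtain ⟨p, hp⟩ := (hLYinf.diff hBadfin).nonempty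
    obtain ⟨lam, ⟨hlamL, hlamY⟩, rfl⟩ := hp.1
    have hav : ∀ t : List G, t <+: l → lam * t.prod ∉ N := by
      intro t ht hinN
      apply hp.2
      refine Set.mem_biUnion (List.mem_toFinset.mpr ((List.mem_inits t l).mpr ht)) ?_
      refine ⟨qm K (lam * t.prod), ⟨lam * t.prod, hinN, rfl⟩, ?_⟩
      rw [rmul_qm]
      exact congrArg (qm K) (mul_inv_cancel_right _ _)
    have hlamgY : lam * g ∈ Y := by
      have := chain l hlmem lam hlamY hav
      rwa [hlprod] at this
    have hlamgX : lam * g ∈ X := hXsat lam hlamL g hgX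
    have hq : qm L (lam * g) = qm L g := by
      rw [qm_eq_iff]
      have : g * (lam * g)⁻¹ = lam⁻¹ := by group
      rw [this]
      exact L.inv_mem hlamL
    rw [← hq]
    exact ⟨lam * g, ⟨hlamgX, hlamgY⟩, rfl⟩
  apply hXinf
  refine hfin.subset ?_
  rintro p ⟨x, hx, rfl⟩
  exact key x hx

end CrossSym

namespace CrossSym
variable {G : Type*} [Group G]

lemma image_mul_compl (Y : Set G) (g : G) :
    (fun x => x * g) '' Yᶜ = ((fun x => x * g) '' Y)ᶜ := by
  ext x
  simp only [Set.mem_compl_iff, Set.mem_image, not_exists]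
  constructor
  · rintro ⟨y, hy, rfl⟩ z ⟨hz, he⟩
    exact hy (mul_right_cancel he ▸ hz)
  · intro h
    refine ⟨x * g⁻¹, fun hx => h (x * g⁻¹) ⟨hx, by simp⟩, by simp⟩

lemma ai_compl {K : Subgroup G} {Y : Set G} (hYsat : Sat K Y)
    (hYai : ∀ g : G, AlmostEqSets (rproj K ((fun x => x * g) '' Y)) (rproj K Y)) :
    ∀ g : G, AlmostEqSets (rproj K ((fun x => x * g) '' Yᶜ)) (rproj K Yᶜ) := by
  intro g
  unfold AlmostEqSets
  rw [image_mul_compl, rproj_compl (sat_mul_right hYsat g), rproj_compl hYsat,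
    compl_symmDiff_compl]
  exact hYai g

lemma oneDir [Group.FG G] (L K : Subgroup G) (X Y : Set G)
    (hX : IsNontrivialAlmostInvariant L X) (hY : IsNontrivialAlmostInvariant K Y)
    (hc : Crosses K X Y) : Crosses L Y X := by
  obtain ⟨⟨hXinv, -⟩, hXinf, hXcinf⟩ := hX
  obtain ⟨⟨hYinv, hYai⟩, -, -⟩ := hY
  have hXsat := sat_of_smul hXinv
  have hYsat := sat_of_smul hYinv
  have hYcai := ai_compl hYsat hYai
  refine ⟨?_, ?_, ?_, ?_⟩ <;> rw [Set.inter_comm] <;> by_contra h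
  · exact main L K X Y hXsat hXinf hYsat hYai (Set.not_infinite.mp h) hc.1
  · exact main L K X Yᶜ hXsat hXinf hYsat.compl hYcai (Set.not_infinite.mp h) hc.2.2.1
  · exact main L K Xᶜ Y hXsat.compl hXcinf hYsat hYai (Set.not_infinite.mp h) hc.2.1
  · exact main L K Xᶜ Yᶜ hXsat.compl hXcinf hYsat.compl hYcai (Set.not_infinite.mp h) hc.2.2.2

end CrossSym


theorem crossing_is_symmetric {G : Type*} [Group G] [Group.FG G]
    (L K : Subgroup G) (X Y : Set G)
    (hX : IsNontrivialAlmostInvariant L X) (hY : IsNontrivialAlmostInvariant K Y) :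
    Crosses K X Y ↔ Crosses L Y X :=
  ⟨CrossSym.oneDir L K X Y hX hY, CrossSym.oneDir K L Y X hY hX⟩
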